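/- Let c > 1 and 0 < h ≤ 1. Then |(1 − c^h)/h + log c| ≤ (c·(log c)²/2) · h. (Section 6.1: for the ODE y' = −u·y, y(0) = 1, the explicit Euler most likely failure point u_h^{MLFP} = (1 − c^h)/h, with c = y_max, converges to the exact most likely failure point u^{MLFP} = −log c with order O(h) in the time step size h.) -/

import Mathlib

open Real Set

lemma exp_sub_one_sub_le (x : ℝ) (hx : 0 ≤ x) :
    Real.exp x - 1 - x ≤ x ^ 2 / 2 * Real.exp x := by
  set f : ℝ → ℝ := fun x => x ^ 2 / 2 * Real.exp x - Real.exp x + 1 + x with hf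
  have hd : ∀ y : ℝ, HasDerivAt f (y * Real.exp y + y ^ 2 / 2 * Real.exp y
      - Real.exp y + 1) y := by
    intro y
    have h1 : HasDerivAt (fun y : ℝ => y ^ 2 / 2) y y := by
      have := (hasDerivAt_pow 2 y).div_const 2
      simpa using this
    have h2 := (h1.mul (Real.hasDerivAt_exp y)).sub (Real.hasDerivAt_exp y)
    have h3 := (h2.add_const 1).add ((hasDerivAt_id y))
    exact h3
  have hmono : MonotoneOn f (Ici (0:ℝ)) := by
    apply monotoneOn_of_deriv_nonneg (convex_Ici 0)
    · exact (Continuous.continuousOn (by continuity))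
    · intro y hy
      exact ((hd y).differentiableAt).differentiableWithinAt
    · intro y hy
      rw [(hd y).deriv]
      have hy0 : 0 ≤ y := le_of_lt (by simpa using hy)
      have h4 : (1 - y) * Real.exp y ≤ 1 := by
        have h5 := mul_le_mul_of_nonneg_right (Real.add_one_le_exp (-y)) (Real.exp_pos y).le
        rw [← Real.exp_add] at h5
        have h6 : (-y + 1) * Real.exp y ≤ 1 := by simpa using h5
        nlinarith [h6]
      nlinarith [Real.exp_pos y, sq_nonneg y]
  have h0 : f 0 ≤ f x := hmono (self_mem_Ici) hx hx
  simp [hf, Real.exp_zero] at h0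
  linarith

/-- Section 6.1: the explicit Euler most likely failure point `(1 - c^h)/h` converges
to the exact most likely failure point `-log c` with order `O(h)` in the step size. -/
theorem euler_mlfp_convergence (c h : ℝ) (hc : 1 < c) (hh : 0 < h) (hh1 : h ≤ 1) :
    |(1 - c ^ h) / h + Real.log c| ≤ c * Real.log c ^ 2 / 2 * h := by
  have hc0 : (0:ℝ) < c := lt_trans one_pos hc
  have hL : 0 < Real.log c := Real.log_pos hc
  set L := Real.log c with hLdef
  have hch : c ^ h = Real.exp (L * h) := by
    rw [Real.rpow_def_of_pos hc0]
  set x := L * h with hx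
  have hx0 : 0 ≤ x := le_of_lt (mul_pos hL hh)
  have hlow : 0 ≤ Real.exp x - 1 - x := by
    have := Real.add_one_le_exp x
    linarith
  have hup : Real.exp x - 1 - x ≤ x ^ 2 / 2 * Real.exp x := exp_sub_one_sub_le x hx0
  have hexpc : Real.exp x ≤ c := by
    calc Real.exp x = c ^ h := hch.symm
    _ ≤ c ^ (1:ℝ) := Real.rpow_le_rpow_of_exponent_le (le_of_lt hc) hh1
    _ = c := Real.rpow_one c
  have hval : (1 - c ^ h) / h + L = -((Real.exp x - 1 - x) / h) := by
    rw [hch]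
    field_simp
    ring
  rw [hval, abs_neg, abs_of_nonneg (div_nonneg hlow (le_of_lt hh))]
  rw [div_le_iff₀ hh]
  have : x ^ 2 / 2 * Real.exp x ≤ c * L ^ 2 / 2 * h * h := by
    have h1 : x ^ 2 / 2 * Real.exp x ≤ x ^ 2 / 2 * c := by
      apply mul_le_mul_of_nonneg_left hexpc (by positivity)
    calc x ^ 2 / 2 * Real.exp x ≤ x ^ 2 / 2 * c := h1
    _ = c * L ^ 2 / 2 * h * h := by rw [hx]; ring
  linarith
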